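/- Let x, y be probability vectors in ℝ_+^n. If e_k(x) ≤ e_k(y) for all k = 1,…,n and 1 < α < 2, then Σ_{i=1}^n x_i^α ≥ Σ_{i=1}^n y_i^α. -/

import Mathlib

open Finset Real MeasureTheory Set

noncomputable def esymm (n k : ℕ) (x : Fin n → ℝ) : ℝ :=
  ∑ s ∈ Finset.powersetCard k (Finset.univ : Finset (Fin n)), ∏ i ∈ s, x i

lemma esymm_zero_eq (n : ℕ) (x : Fin n → ℝ) : esymm n 0 x = 1 := by
  simp [esymm]



noncomputable def gfun (u : ℝ) : ℝ := u - Real.log (1 + u)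

lemma gfun_nonneg {u : ℝ} (hu : 0 ≤ u) : 0 ≤ gfun u := by
  have h := Real.log_le_sub_one_of_pos (show (0:ℝ) < 1 + u by linarith)
  unfold gfun; linarith

lemma gfun_le_self {u : ℝ} (hu : 0 ≤ u) : gfun u ≤ u := by
  have h := Real.log_nonneg (show (1:ℝ) ≤ 1 + u by linarith)
  unfold gfun; linarith

lemma gfun_le_sq {u : ℝ} (hu : 0 ≤ u) : gfun u ≤ u ^ 2 := by
  have h1 : (0:ℝ) < 1 + u := by linarith
  have h := Real.one_sub_inv_le_log_of_pos h1
  have h2 : 1 - (1+u)⁻¹ = u / (1+u) := by field_simp; ring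
  have h3 : u / (1+u) ≤ u := by
    rw [div_le_iff₀ h1]; nlinarith
  have h4 : u - u^2 ≤ u / (1+u) := by
    rw [le_div_iff₀ h1]; nlinarith
  unfold gfun; rw [h2] at h; nlinarith

lemma contOn (x s : ℝ) (hx : 0 ≤ x) :
    ContinuousOn (fun u => gfun (u * x) * u ^ (-2 - s)) (Ioi (0:ℝ)) := by
  apply ContinuousOn.mul
  · unfold gfun
    apply ContinuousOn.sub
    · exact (continuous_mul_right x).continuousOn
    · apply ContinuousOn.log
      · exact (continuous_const.add (continuous_mul_right x)).continuousOn
      · intro u hu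
        have : 0 ≤ u * x := mul_nonneg (le_of_lt hu) hx
        positivity
  · exact fun u hu => (Real.continuousAt_rpow_const u _ (Or.inl (ne_of_gt hu))).continuousWithinAt

lemma integrable_g (x s : ℝ) (hx : 0 ≤ x) (hs0 : 0 < s) (hs1 : s < 1) :
    IntegrableOn (fun u => gfun (u * x) * u ^ (-2 - s)) (Ioi (0:ℝ)) := by
  have hmeas : ∀ t ⊆ Ioi (0:ℝ), MeasurableSet t →
      AEStronglyMeasurable (fun u => gfun (u * x) * u ^ (-2 - s)) (volume.restrict t) := by
    intro t ht hmt
    exact ((contOn x s hx).mono ht).aestronglyMeasurable hmt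
  have h1 : IntegrableOn (fun u => gfun (u * x) * u ^ (-2 - s)) (Ioc (0:ℝ) 1) := by
    have hbound : IntegrableOn (fun u : ℝ => x ^ 2 * u ^ (-s)) (Ioc (0:ℝ) 1) := by
      apply Integrable.const_mul
      exact (intervalIntegrable_iff_integrableOn_Ioc_of_le zero_le_one).mp
        (intervalIntegral.intervalIntegrable_rpow' (by linarith))
    refine Integrable.mono' hbound (hmeas _ Ioc_subset_Ioi_self measurableSet_Ioc) ?_
    filter_upwards [ae_restrict_mem measurableSet_Ioc] with u hu
    have hu0 : 0 < u := hu.1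
    have hux : 0 ≤ u * x := mul_nonneg hu0.le hx
    rw [Real.norm_eq_abs, abs_of_nonneg (mul_nonneg (gfun_nonneg hux) (Real.rpow_nonneg hu0.le _))]
    have : gfun (u * x) ≤ (u * x) ^ 2 := gfun_le_sq hux
    have h2 : (u*x)^2 * u ^ (-2-s) = x^2 * u ^ (-s) := by
      have : u ^ (2:ℝ) * u ^ (-2-s) = u ^ (-s) := by
        rw [← Real.rpow_add hu0]; congr 1; ring
      rw [mul_pow, ← Real.rpow_natCast u 2]
      push_cast
      rw [mul_comm (u ^ (2:ℝ)), mul_assoc, this]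
    calc gfun (u*x) * u ^ (-2-s) ≤ (u*x)^2 * u ^ (-2-s) :=
          mul_le_mul_of_nonneg_right this (Real.rpow_nonneg hu0.le _)
      _ = x^2 * u ^ (-s) := h2
  have h2 : IntegrableOn (fun u => gfun (u * x) * u ^ (-2 - s)) (Ioi (1:ℝ)) := by
    have hbound : IntegrableOn (fun u : ℝ => x * u ^ (-1-s)) (Ioi (1:ℝ)) := by
      exact (integrableOn_Ioi_rpow_of_lt (by linarith) one_pos).const_mul x
    refine Integrable.mono' hbound (hmeas _ (fun u hu => mem_Ioi.mpr (lt_trans one_pos (mem_Ioi.mp hu))) measurableSet_Ioi) ?_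
    filter_upwards [ae_restrict_mem measurableSet_Ioi] with u hu
    have hu0 : (0:ℝ) < u := lt_trans one_pos hu
    have hux : 0 ≤ u * x := mul_nonneg hu0.le hx
    rw [Real.norm_eq_abs, abs_of_nonneg (mul_nonneg (gfun_nonneg hux) (Real.rpow_nonneg hu0.le _))]
    have : gfun (u * x) ≤ u * x := gfun_le_self hux
    have h2 : (u*x) * u ^ (-2-s) = x * u ^ (-1-s) := by
      rw [mul_comm u x, mul_assoc]
      congr 1
      rw [← Real.rpow_one_add' (by positivity) (by intro h; linarith)]
      congr 1; ring
    calc gfun (u*x) * u ^ (-2-s) ≤ (u*x) * u ^ (-2-s) :=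
          mul_le_mul_of_nonneg_right this (Real.rpow_nonneg hu0.le _)
      _ = x * u ^ (-1-s) := h2
  have := h1.union h2
  rwa [Ioc_union_Ioi_eq_Ioi zero_le_one] at this

noncomputable def Iconst (s : ℝ) : ℝ := ∫ u in Ioi (0:ℝ), gfun u * u ^ (-2 - s)

lemma gfun_pos {u : ℝ} (hu : 0 < u) : 0 < gfun u := by
  have h := Real.log_lt_sub_one_of_pos (show (0:ℝ) < 1 + u by linarith)
    (show (1:ℝ) + u ≠ 1 by intro h; linarith)
  unfold gfun; linarith

lemma Iconst_pos (s : ℝ) (hs0 : 0 < s) (hs1 : s < 1) : 0 < Iconst s := by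
  have hint : IntegrableOn (fun u => gfun (u * 1) * u ^ (-2 - s)) (Ioi (0:ℝ)) :=
    integrable_g 1 s zero_le_one hs0 hs1
  simp only [mul_one] at hint
  have hnn : 0 ≤ᵐ[volume.restrict (Ioi (0:ℝ))] fun u => gfun u * u ^ (-2 - s) := by
    filter_upwards [ae_restrict_mem measurableSet_Ioi] with u hu
    exact mul_nonneg (gfun_nonneg (le_of_lt hu)) (Real.rpow_nonneg (le_of_lt hu) _)
  rw [Iconst, setIntegral_pos_iff_support_of_nonneg_ae hnn hint]
  have hsub : Ioi (0:ℝ) ⊆ Function.support (fun u => gfun u * u ^ (-2 - s)) ∩ Ioi 0 := by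
    intro u hu
    refine ⟨?_, hu⟩
    have := mul_pos (gfun_pos hu) (Real.rpow_pos_of_pos hu (-2 - s))
    exact ne_of_gt this
  calc (0:ENNReal) < volume (Ioi (0:ℝ)) := by simp
    _ ≤ _ := measure_mono hsub

lemma grepr (x s : ℝ) (hx : 0 ≤ x) (hs0 : 0 < s) (hs1 : s < 1) :
    ∫ u in Ioi (0:ℝ), gfun (u * x) * u ^ (-2 - s) = x ^ (1 + s) * Iconst s := by
  rcases eq_or_lt_of_le hx with h | h
  · simp only [← h, mul_zero]
    have : gfun 0 = 0 := by unfold gfun; simp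
    rw [this]
    simp [Real.zero_rpow (by positivity : (1:ℝ) + s ≠ 0)]
  · have key : ∀ u ∈ Ioi (0:ℝ), gfun (u * x) * u ^ (-2 - s)
        = x ^ (2 + s) * (gfun (x * u) * (x * u) ^ (-2 - s)) := by
      intro u hu
      have hu0 : (0:ℝ) < u := hu
      rw [Real.mul_rpow h.le hu0.le, mul_comm u x]
      rw [show x ^ (2+s) * (gfun (x*u) * (x ^ (-2-s) * u ^ (-2-s)))
            = (x ^ (2+s) * x ^ (-2-s)) * (gfun (x*u) * u ^ (-2-s)) by ring]
      rw [← Real.rpow_add h]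
      norm_num
    rw [setIntegral_congr_fun measurableSet_Ioi key, MeasureTheory.integral_const_mul]
    have := MeasureTheory.integral_comp_mul_left_Ioi
      (fun v => gfun v * v ^ (-2 - s)) 0 h
    simp only [mul_zero] at this
    rw [this, ← Iconst, smul_eq_mul, ← mul_assoc]
    congr 1
    rw [show x⁻¹ = x ^ (-1:ℝ) by rw [Real.rpow_neg_one], ← Real.rpow_add h]
    congr 1; ring

lemma prod_one_add_eq (n : ℕ) (x : Fin n → ℝ) (u : ℝ) :
    ∏ i, (1 + u * x i) = ∑ k ∈ range (n+1), esymm n k x * u ^ k := by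
  have h := Finset.prod_add (fun i : Fin n => u * x i) (fun _ => (1:ℝ)) univ
  simp only [add_comm (1:ℝ)] at h ⊢
  rw [h, powerset_card_disjiUnion]; erw [sum_disjiUnion]
  simp only [card_univ, Fintype.card_fin]
  refine Finset.sum_congr rfl fun k hk => ?_
  rw [esymm, sum_mul]
  refine Finset.sum_congr rfl fun s hs => ?_
  have hcard : s.card = k := (Finset.mem_powersetCard.mp hs).2
  rw [prod_const_one, mul_one, Finset.prod_mul_distrib, prod_const, hcard, mul_comm]

section main

variable {n : ℕ}

lemma sum_gfun_eq (x : Fin n → ℝ) (hx : ∀ i, 0 ≤ x i) (hx1 : ∑ i, x i = 1)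
    {u : ℝ} (hu : 0 < u) :
    ∑ i, (u * x i - Real.log (1 + u * x i)) = u - Real.log (∏ i, (1 + u * x i)) := by
  rw [Finset.sum_sub_distrib, ← Finset.mul_sum, hx1, mul_one]
  congr 1
  rw [Real.log_prod]
  intro i _
  have : 0 ≤ u * x i := mul_nonneg hu.le (hx i)
  positivity

lemma prod_le_prod_of_esymm (x y : Fin n → ℝ)
    (hE : ∀ k, 1 ≤ k → k ≤ n → esymm n k x ≤ esymm n k y) {u : ℝ} (hu : 0 ≤ u) :
    ∏ i, (1 + u * x i) ≤ ∏ i, (1 + u * y i) := by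
  rw [prod_one_add_eq, prod_one_add_eq]
  refine Finset.sum_le_sum fun k hk => ?_
  rcases Nat.eq_zero_or_pos k with rfl | hk1
  · rw [esymm_zero_eq, esymm_zero_eq]
  · have hkn : k ≤ n := Nat.lt_succ_iff.mp (Finset.mem_range.mp hk)
    exact mul_le_mul_of_nonneg_right (hE k hk1 hkn) (pow_nonneg hu k)

end main

theorem stmt_9 (n : ℕ) (x y : Fin n → ℝ)
    (hx : ∀ i, 0 ≤ x i) (hy : ∀ i, 0 ≤ y i)
    (hx1 : ∑ i, x i = 1) (hy1 : ∑ i, y i = 1)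
    (hE : ∀ k, 1 ≤ k → k ≤ n → esymm n k x ≤ esymm n k y)
    (α : ℝ) (hα : 1 < α) (hα2 : α < 2) :
    ∑ i, (y i) ^ α ≤ ∑ i, (x i) ^ α := by
  set s : ℝ := α - 1 with hsdef
  have hs0 : 0 < s := by rw [hsdef]; linarith
  have hs1 : s < 1 := by rw [hsdef]; linarith
  have hα' : 1 + s = α := by rw [hsdef]; ring
  have hI := Iconst_pos s hs0 hs1
  have hrep : ∀ (z : Fin n → ℝ), (∀ i, 0 ≤ z i) →
      (∫ u in Set.Ioi (0:ℝ), ∑ i, gfun (u * z i) * u ^ (-2 - s))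
        = (∑ i, (z i) ^ α) * Iconst s := by
    intro z hz
    rw [MeasureTheory.integral_finset_sum _
      (fun i _ => integrable_g (z i) s (hz i) hs0 hs1), Finset.sum_mul]
    exact Finset.sum_congr rfl fun i _ => by
      rw [grepr (z i) s (hz i) hs0 hs1, hα']
  have hmono : (∫ u in Set.Ioi (0:ℝ), ∑ i, gfun (u * y i) * u ^ (-2 - s))
      ≤ ∫ u in Set.Ioi (0:ℝ), ∑ i, gfun (u * x i) * u ^ (-2 - s) := by
    refine MeasureTheory.setIntegral_mono_on
      (MeasureTheory.integrable_finset_sum _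
        (fun i _ => integrable_g (y i) s (hy i) hs0 hs1))
      (MeasureTheory.integrable_finset_sum _
        (fun i _ => integrable_g (x i) s (hx i) hs0 hs1))
      measurableSet_Ioi ?_
    intro u hu
    have hu0 : (0:ℝ) < u := hu
    rw [← Finset.sum_mul, ← Finset.sum_mul]
    refine mul_le_mul_of_nonneg_right ?_ (Real.rpow_nonneg hu0.le _)
    show ∑ i, gfun (u * y i) ≤ ∑ i, gfun (u * x i)
    unfold gfun
    rw [sum_gfun_eq y hy hy1 hu0, sum_gfun_eq x hx hx1 hu0]
    have hpx : (0:ℝ) < ∏ i, (1 + u * x i) := by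
      apply Finset.prod_pos
      intro i _
      have : 0 ≤ u * x i := mul_nonneg hu0.le (hx i)
      linarith
    have hprod := prod_le_prod_of_esymm x y hE hu0.le
    have hlog := Real.log_le_log hpx hprod
    linarith
  have h1 := hrep x hx
  have h2 := hrep y hy
  have hfin : (∑ i, (y i) ^ α) * Iconst s ≤ (∑ i, (x i) ^ α) * Iconst s := by
    rw [← h1, ← h2]; exact hmono
  exact le_of_mul_le_mul_right hfin hI
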